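/- Let c = 2^{2/3} (the real cube root of 4's square root convention: c³ = 4, c² = 2^{4/3}). For all complex numbers t, f, g, a, the function ε ↦ (ε³/4)·F_IV(εt/c − 1/ε³, c·f/ε + 1/ε³, c²·g/ε², −2a − 1/(2ε⁶), −1/(2ε¹²)) tends to 2f³ + tf + a as ε → 0 along nonzero complex values of ε (punctured neighborhood filter of 0 in ℂ). -/

import Mathlib

set_option maxHeartbeats 2000000


/-- Right-hand side of the fourth Painlevé equation:
`F_IV(x,u,v,α,β) = v²/(2u) + (3/2)u³ + 4xu² + 2(x²−α)u + β/u`. -/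
noncomputable def FIV (x u v α β : ℂ) : ℂ :=
  v ^ 2 / (2 * u) + (3 / 2) * u ^ 3 + 4 * x * u ^ 2 + 2 * (x ^ 2 - α) * u + β / u

/-- Degeneration of Painlevé IV to Painlevé II: with `c = 2^(2/3)`, for all `t f g a : ℂ`,
the function `ε ↦ (ε³/4)·F_IV(εt/c − 1/ε³, cf/ε + 1/ε³, c²g/ε², −2a − 1/(2ε⁶), −1/(2ε¹²))`
tends to `2f³ + tf + a` as `ε → 0` along nonzero complex values. -/
theorem stmt_4 (t f g a : ℂ) (c : ℂ) (hc : c = (2 : ℂ) ^ ((2 : ℂ) / 3)) :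
    Filter.Tendsto
      (fun ε : ℂ =>
        (ε ^ 3 / 4) *
          FIV (ε * t / c - 1 / ε ^ 3) (c * f / ε + 1 / ε ^ 3) (c ^ 2 * g / ε ^ 2)
            (-2 * a - 1 / (2 * ε ^ 6)) (-1 / (2 * ε ^ 12)))
      (nhdsWithin 0 {0}ᶜ) (nhds (2 * f ^ 3 + t * f + a)) := by
  have h2 : (2 : ℂ) ≠ 0 := two_ne_zero
  have hc3 : c ^ 3 = 4 := by
    rw [hc, ← Complex.cpow_nat_mul]
    norm_num
  have hc0 : c ≠ 0 := by
    intro h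
    rw [h] at hc3
    norm_num at hc3
  set w : ℂ → ℂ := fun ε => c * f * ε ^ 2 + 1 with hw
  set num : ℂ → ℂ := fun ε =>
    f * t + c ^ 3 / 2 * f ^ 3 + a * (w ε) ^ 2 + c ^ 4 * g ^ 2 / 8 * ε ^ 2
      + ε ^ 2 * (t ^ 2 / (2 * c ^ 2) + 2 * c * f ^ 2 * t + 3 * c ^ 4 / 8 * f ^ 4)
      + ε ^ 4 * (f * t ^ 2 / c + c ^ 2 * f ^ 3 * t) + ε ^ 6 * (f ^ 2 * t ^ 2 / 2) with hnum
  have hwcont : Filter.Tendsto w (nhdsWithin 0 {0}ᶜ) (nhds 1) := by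
    have : Filter.Tendsto w (nhds 0) (nhds (w 0)) :=
      ((continuous_const.mul (continuous_pow 2)).add continuous_const).tendsto 0
    simpa [hw] using this.mono_left nhdsWithin_le_nhds
  have hlim : Filter.Tendsto (fun ε => num ε / w ε) (nhdsWithin 0 {0}ᶜ)
      (nhds (2 * f ^ 3 + t * f + a)) := by
    have hn : Filter.Tendsto num (nhdsWithin 0 {0}ᶜ) (nhds (2 * f ^ 3 + t * f + a)) := by
      have : Filter.Tendsto num (nhds 0) (nhds (num 0)) := by
        apply Continuous.tendsto
        continuity
      have h0 : num 0 = 2 * f ^ 3 + t * f + a := by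
        simp [hnum, hw, hc3]; ring
      rw [h0] at this
      exact this.mono_left nhdsWithin_le_nhds
    have := hn.div hwcont one_ne_zero
    rw [div_one] at this
    exact this
  refine hlim.congr' ?_
  have hne : ∀ᶠ ε in nhdsWithin 0 {0}ᶜ, w ε ≠ 0 := hwcont.eventually_ne one_ne_zero
  have hmem : ∀ᶠ ε in nhdsWithin (0:ℂ) {0}ᶜ, ε ∈ ({0}ᶜ : Set ℂ) :=
    eventually_mem_nhdsWithin
  filter_upwards [hne, hmem] with ε hwε hε
  rw [Set.mem_compl_singleton_iff] at hε
  have hw2 : c * f * ε ^ 2 + 1 ≠ 0 := hwε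
  rw [FIV]
  simp only [hnum, hw]
  rw [div_eq_iff hw2]
  have hu : c * f / ε + 1 / ε ^ 3 = (c * f * ε ^ 2 + 1) / ε ^ 3 := by
    field_simp
  rw [hu]
  revert hw2
  generalize hW : c * f * ε ^ 2 + 1 = W
  intro hWne
  have hD : (8 : ℂ) * c ^ 2 * ε ^ 9 * W ≠ 0 := by
    exact mul_ne_zero (mul_ne_zero (mul_ne_zero (by norm_num) (pow_ne_zero _ hc0))
      (pow_ne_zero _ hε)) hWne
  have A1 : (c ^ 2 * g / ε ^ 2) ^ 2 / (2 * (W / ε ^ 3))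
      = 4 * c ^ 6 * g ^ 2 * ε ^ 8 / (8 * c ^ 2 * ε ^ 9 * W) := by
    have e1 : (c ^ 2 * g / ε ^ 2) ^ 2 / (2 * (W / ε ^ 3)) = c ^ 4 * g ^ 2 / (2 * ε * W) := by
      field_simp
    rw [e1, div_eq_div_iff (mul_ne_zero (mul_ne_zero two_ne_zero hε) hWne) hD]
    ring
  have A2 : (3 : ℂ) / 2 * (W / ε ^ 3) ^ 3 = 12 * c ^ 2 * W ^ 4 / (8 * c ^ 2 * ε ^ 9 * W) := by
    have e2 : (3 : ℂ) / 2 * (W / ε ^ 3) ^ 3 = 3 * W ^ 3 / (2 * ε ^ 9) := by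
      field_simp
    rw [e2, div_eq_div_iff (mul_ne_zero two_ne_zero (pow_ne_zero _ hε)) hD]
    ring
  have A3 : 4 * (ε * t / c - 1 / ε ^ 3) * (W / ε ^ 3) ^ 2
      = (32 * t * ε ^ 4 - 32 * c) * c * W ^ 3 / (8 * c ^ 2 * ε ^ 9 * W) := by
    have e3 : 4 * (ε * t / c - 1 / ε ^ 3) * (W / ε ^ 3) ^ 2
        = (4 * t * ε ^ 4 - 4 * c) * W ^ 2 / (c * ε ^ 9) := by
      field_simp
    rw [e3, div_eq_div_iff (mul_ne_zero hc0 (pow_ne_zero _ hε)) hD]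
    ring
  have A4 : 2 * ((ε * t / c - 1 / ε ^ 3) ^ 2 - (-2 * a - 1 / (2 * ε ^ 6))) * (W / ε ^ 3)
      = 8 * W ^ 2 * (2 * (t * ε ^ 4 - c) ^ 2 + 4 * a * c ^ 2 * ε ^ 6 + c ^ 2)
        / (8 * c ^ 2 * ε ^ 9 * W) := by
    have e4 : 2 * ((ε * t / c - 1 / ε ^ 3) ^ 2 - (-2 * a - 1 / (2 * ε ^ 6))) * (W / ε ^ 3)
        = (2 * (t * ε ^ 4 - c) ^ 2 * W + 4 * a * W * c ^ 2 * ε ^ 6 + W * c ^ 2)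
          / (c ^ 2 * ε ^ 9) := by
      rw [eq_div_iff (mul_ne_zero (pow_ne_zero _ hc0) (pow_ne_zero _ hε))]
      field_simp
      ring_nf
    rw [e4, div_eq_div_iff (mul_ne_zero (pow_ne_zero _ hc0) (pow_ne_zero _ hε)) hD]
    ring
  have A5 : -1 / (2 * ε ^ 12) / (W / ε ^ 3)
      = -(4 * c ^ 2) / (8 * c ^ 2 * ε ^ 9 * W) := by
    have e5 : -1 / (2 * ε ^ 12) / (W / ε ^ 3) = -1 / (2 * ε ^ 9 * W) := by
      field_simp
    rw [e5, div_eq_div_iff (mul_ne_zero (mul_ne_zero two_ne_zero (pow_ne_zero _ hε)) hWne) hD]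
    ring
  rw [A1, A2, A3, A4, A5, ← add_div, ← add_div, ← add_div,
    ← add_div]
  have key : ∀ X : ℂ, ε ^ 3 / 4 * (X / (8 * c ^ 2 * ε ^ 9 * W)) * W
      = X / (32 * c ^ 2 * ε ^ 6) := by
    intro X
    field_simp
    ring
  rw [key]
  rw [eq_div_iff (by
    exact mul_ne_zero (mul_ne_zero (by norm_num) (pow_ne_zero _ hc0)) (pow_ne_zero _ hε))]
  field_simp
  subst hW
  have hcc : c ^ 2 * c⁻¹ ^ 2 = 1 := by
    rw [← mul_pow, mul_inv_cancel₀ hc0, one_pow]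
  linear_combination ((((f * t * 2 + c ^ 3 * f ^ 3 + a * (c * f * ε ^ 2 + 1) ^ 2 * 2) * 8
    + c ^ 4 * g ^ 2 * ε ^ 2 * 2) * (2 * c ^ 2 * 8)
    + ε ^ 2 * ((t ^ 2 + 2 * c * f ^ 2 * t * (2 * c ^ 2)) * 8
    + 3 * c ^ 4 * f ^ 4 * (2 * c ^ 2)) * (2 * 8)) * c * ε ^ 6 / 4) * hcc
    - (ε ^ 6 * c ^ 3 * f * t * 64 + ε ^ 6 * c ^ 3 * a * 64 + ε ^ 6 * c ^ 6 * f ^ 3 * 32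
    + ε ^ 8 * c * t ^ 2 * 32 + ε ^ 8 * c ^ 4 * f * a * 128 + ε ^ 8 * c ^ 4 * f ^ 2 * t * 128
    + ε ^ 8 * c ^ 7 * f ^ 4 * 24 + ε ^ 8 * c ^ 7 * g ^ 2 * 8 + ε ^ 10 * c ^ 5 * f ^ 2 * a * 64) * hcc
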